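/- Let A be a uniform nonarchimedean Banach ring (the norm is equivalent to a power-multiplicative norm). Choose x = ∑_{n≥0} x_n T^n in the Tate algebra A⟨T⟩ such that the coefficients x_n generate the unit ideal of A. Then multiplication by x is a strict injection A⟨T⟩ → A⟨T⟩; in particular the principal ideal (x) is closed in A⟨T⟩. -/

import Mathlib

open Filter

/-- A (nonarchimedean, commutative) Banach ring norm. -/
structure IsNABanach {B : Type*} [CommRing B] (nm : B → ℝ) : Prop where
  nonneg : ∀ x, 0 ≤ nm x
  eq_zero_iff : ∀ x, nm x = 0 ↔ x = 0
  nonarch : ∀ x y, nm (x - y) ≤ max (nm x) (nm y)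
  submul : ∀ x y, nm (x * y) ≤ nm x * nm y
  complete : ∀ u : ℕ → B,
    (∀ ε : ℝ, 0 < ε → ∃ N, ∀ m ≥ N, ∀ n ≥ N, nm (u m - u n) < ε) →
    ∃ x, ∀ ε : ℝ, 0 < ε → ∃ N, ∀ n ≥ N, nm (u n - x) < ε

namespace Stmt7Aux

/-- Pass to the limit `ε → 0⁺` in an inequality. -/
lemma le_of_forall_pos {a b : ℝ} {f : ℝ → ℝ} (hc : ContinuousAt f 0) (h0 : f 0 = b)
    (h : ∀ ε : ℝ, 0 < ε → a ≤ f ε) : a ≤ b := by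
  subst h0
  refine ge_of_tendsto (x := nhdsWithin 0 (Set.Ioi 0))
    (hc.tendsto.mono_left nhdsWithin_le_nhds) ?_
  exact eventually_mem_nhdsWithin.mono fun ε hε => h ε hε

/-- A nonarchimedean multiplicatively-submultiplicative seminorm (with `p 1 = 1`). -/
structure SN {R : Type*} [CommRing R] (p : R → ℝ) : Prop where
  nonneg : ∀ f, 0 ≤ p f
  zero : p 0 = 0
  one : p 1 = 1
  nonarch : ∀ f g, p (f - g) ≤ max (p f) (p g)
  submul : ∀ f g, p (f * g) ≤ p f * p g

/-- A power-multiplicative such seminorm. -/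
structure PMS {R : Type*} [CommRing R] (p : R → ℝ) extends SN p : Prop where
  powmul : ∀ f (n : ℕ), p (f ^ (n + 1)) = p f ^ (n + 1)

variable {R : Type*} [CommRing R] {p : R → ℝ}

lemma SN.neg (hp : SN p) (f : R) : p (-f) = p f := by
  have h1 : ∀ g : R, p (-g) ≤ p g := by
    intro g
    have := hp.nonarch 0 g
    simpa [hp.zero, hp.nonneg g] using this
  have h2 := h1 (-f)
  rw [neg_neg] at h2
  exact le_antisymm (h1 f) h2

lemma SN.add_le (hp : SN p) (f g : R) : p (f + g) ≤ max (p f) (p g) := by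
  have := hp.nonarch f (-g)
  rw [sub_neg_eq_add, hp.neg] at this
  exact this

lemma PMS.pow (hp : PMS p) (f : R) (n : ℕ) : p (f ^ n) = p f ^ n := by
  cases n with
  | zero => simp [hp.one]
  | succ n => exact hp.powmul f n

lemma SN.sum_le (hp : SN p) {ι : Type*} (s : Finset ι) (h : ι → R) {B : ℝ} (hB : 0 ≤ B)
    (hb : ∀ i ∈ s, p (h i) ≤ B) : p (∑ i ∈ s, h i) ≤ B := by
  classical
  induction s using Finset.induction with
  | empty => simpa [hp.zero] using hB
  | insert _ _ hndup ih =>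
    rename_i a s
    rw [Finset.sum_insert hndup]
    refine le_trans (hp.add_le _ _) (max_le (hb a (by simp)) (ih fun i hi => hb i (by simp [hi])))

lemma SN.sum_lt (hp : SN p) {ι : Type*} (s : Finset ι) (h : ι → R) {B : ℝ} (hB : 0 < B)
    (hb : ∀ i ∈ s, p (h i) < B) : p (∑ i ∈ s, h i) < B := by
  classical
  induction s using Finset.induction with
  | empty => simpa [hp.zero] using hB
  | insert _ _ hndup ih =>
    rename_i a s
    rw [Finset.sum_insert hndup]
    refine lt_of_le_of_lt (hp.add_le _ _) (max_lt (hb a (by simp))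
      (ih fun i hi => hb i (by simp [hi])))

lemma SN.nsmul_le (hp : SN p) (n : ℕ) (f : R) : p (n • f) ≤ p f := by
  induction n with
  | zero => simpa [hp.zero] using hp.nonneg f
  | succ n ih =>
    rw [succ_nsmul]
    exact le_trans (hp.add_le _ _) (max_le ih le_rfl)

/-- Every power-multiplicative bound dominates a multiplicative seminorm. -/
lemma exists_mult_le {R : Type*} [CommRing R] (Q : R → ℝ) (hQ : PMS Q) :
    ∃ p : R → ℝ, PMS p ∧ (∀ f g, p (f * g) = p f * p g) ∧ ∀ f, p f ≤ Q f := by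
  classical
  set S : Set (R → ℝ) := {p | PMS p ∧ ∀ f, p f ≤ Q f} with hS
  -- Zorn's lemma (for minimal elements, via the dual order)
  have hzorn : ∃ m ∈ S, (∀ f, m f ≤ Q f) ∧ ∀ z ∈ S, (∀ f, z f ≤ m f) → z = m := by
    have hih : ∀ c : Set ((R → ℝ)ᵒᵈ), c ⊆ S → IsChain (· ≤ ·) c → ∀ y ∈ c,
        ∃ ub ∈ S, ∀ z ∈ c, z ≤ ub := by
      rintro c hcS hchain y hy
      haveI : Nonempty c := ⟨⟨y, hy⟩⟩
      set m : R → ℝ := fun f => ⨅ q : c, (OrderDual.ofDual q.1) f with hm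
      have hmem : ∀ q : c, (OrderDual.ofDual q.1) ∈ S := fun q => hcS q.2
      have hbdd : ∀ f, BddBelow (Set.range fun q : c => (OrderDual.ofDual q.1) f) := by
        intro f
        refine ⟨0, ?_⟩
        rintro v ⟨q, rfl⟩
        exact (hmem q).1.nonneg f
      have hle : ∀ (q : c) f, m f ≤ (OrderDual.ofDual q.1) f := fun q f => ciInf_le (hbdd f) q
      have hnonneg : ∀ f, 0 ≤ m f := fun f => le_ciInf fun q => (hmem q).1.nonneg f
      -- for every f and ε > 0 there is a chain element close to the inf at f and
      -- (by chain-ness) simultaneously at a second point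
      have hclose : ∀ (f g : R) (ε : ℝ), 0 < ε →
          ∃ q : c, (OrderDual.ofDual q.1) f < m f + ε ∧ (OrderDual.ofDual q.1) g < m g + ε := by
        intro f g ε hε
        obtain ⟨q1, hq1⟩ := exists_lt_of_ciInf_lt (a := m f + ε) (by linarith [le_refl (m f)])
        obtain ⟨q2, hq2⟩ := exists_lt_of_ciInf_lt (a := m g + ε) (by linarith [le_refl (m g)])
        rcases eq_or_ne q1 q2 with h | h
        · exact ⟨q1, hq1, h ▸ hq2⟩
        · rcases hchain q1.2 q2.2 (fun hh => h (Subtype.ext hh)) with h12 | h12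
          · -- q1 ≤ q2 in dual order, i.e. q2 ≤ q1 pointwise
            exact ⟨q2, lt_of_le_of_lt (h12 f) hq1, hq2⟩
          · exact ⟨q1, hq1, lt_of_le_of_lt (h12 g) hq2⟩
      have hmS' : m ∈ S := by
        constructor
        · constructor
          · constructor
            · exact hnonneg
            · refine le_antisymm ?_ (hnonneg 0)
              exact le_trans (hle ⟨y, hy⟩ 0) (le_of_eq ((hcS hy).1.zero))
            · refine le_antisymm (le_trans (hle ⟨y, hy⟩ 1) (le_of_eq ((hcS hy).1.one))) ?_
              exact le_ciInf fun q => ((hmem q).1.one).ge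
            · intro f g
              refine le_of_forall_pos (f := fun ε => max (m f) (m g) + ε)
                (by fun_prop) (by simp) ?_
              intro ε hε
              beta_reduce
              obtain ⟨q, hqf, hqg⟩ := hclose f g ε hε
              refine le_trans (hle q (f - g)) (le_trans ((hmem q).1.nonarch f g) ?_)
              exact max_le (by linarith [le_max_left (m f) (m g)])
                (by linarith [le_max_right (m f) (m g)])
            · intro f g
              refine le_of_forall_pos (f := fun ε => (m f + ε) * (m g + ε))
                (by fun_prop) (by simp) ?_
              intro ε hε
              beta_reduce
              obtain ⟨q, hqf, hqg⟩ := hclose f g ε hε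
              refine le_trans (hle q (f * g)) (le_trans ((hmem q).1.submul f g) ?_)
              exact mul_le_mul hqf.le hqg.le ((hmem q).1.nonneg g) (by linarith [hnonneg f])
          · intro f n
            refine le_antisymm ?_ ?_
            · refine le_of_forall_pos (f := fun ε => (m f + ε) ^ (n + 1))
                (by fun_prop) (by simp) ?_
              intro ε hε
              beta_reduce
              obtain ⟨q, hqf, _⟩ := hclose f f ε hε
              refine le_trans (hle q (f ^ (n + 1))) ?_
              rw [(hmem q).1.powmul f n]
              exact pow_le_pow_left₀ ((hmem q).1.nonneg f) hqf.le _
            · refine le_ciInf fun q => ?_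
              rw [(hmem q).1.powmul f n]
              exact pow_le_pow_left₀ (hnonneg f) (hle q f) _
        · exact fun f => le_trans (hle ⟨y, hy⟩ f) ((hcS hy).2 f)
      exact ⟨m, hmS', fun z hz f => hle ⟨z, hz⟩ f⟩
    obtain ⟨m, hQm, hmax⟩ := zorn_le_nonempty₀ (α := (R → ℝ)ᵒᵈ) S hih Q ⟨hQ, fun f => le_rfl⟩
    refine ⟨m, hmax.1, fun f => hQm f, ?_⟩
    intro z hz hzm
    have h2 := hmax.2 hz (show (m : (R → ℝ)ᵒᵈ) ≤ z from fun f => hzm f)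
    exact le_antisymm hzm (fun f => h2 f)
  obtain ⟨m, hmS, hmQ, hmin⟩ := hzorn
  refine ⟨m, hmS.1, ?_, hmQ⟩
  -- minimal elements are multiplicative: use the seminorm from a constant
  have key : ∀ c : R, 0 < m c → ∀ f, m (c * f) = m c * m f := by
    intro c hc
    set b : R → ℕ → ℝ := fun f n => m (f * c ^ n) / (m c) ^ n with hb
    have hcpow : ∀ n : ℕ, m (c ^ n) = m c ^ n := hmS.1.pow c
    have hbanti : ∀ f, ∀ i j : ℕ, i ≤ j → b f j ≤ b f i := by
      intro f i j hij
      induction j with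
      | zero =>
        have h0 : i = 0 := Nat.le_zero.mp hij
        subst h0; exact le_rfl
      | succ j ih =>
        rcases Nat.lt_or_ge i (j + 1) with h | h
        · refine le_trans ?_ (ih (Nat.lt_succ_iff.mp h))
          show m (f * c ^ (j + 1)) / m c ^ (j + 1) ≤ m (f * c ^ j) / m c ^ j
          rw [div_le_div_iff₀ (by positivity) (by positivity)]
          have : m (f * c ^ (j + 1)) ≤ m (f * c ^ j) * m c := by
            have := hmS.1.submul (f * c ^ j) c
            rw [mul_assoc, ← pow_succ] at this
            exact this
          calc m (f * c ^ (j + 1)) * m c ^ j ≤ (m (f * c ^ j) * m c) * m c ^ j := by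
                exact mul_le_mul_of_nonneg_right this (by positivity)
            _ = m (f * c ^ j) * m c ^ (j + 1) := by ring
        · have : i = j + 1 := le_antisymm hij h
          subst this; exact le_rfl
    have hbnonneg : ∀ f n, 0 ≤ b f n := by
      intro f n
      exact div_nonneg (hmS.1.nonneg _) (by positivity)
    have hbdd : ∀ f, BddBelow (Set.range (b f)) := by
      intro f; exact ⟨0, by rintro v ⟨n, rfl⟩; exact hbnonneg f n⟩
    set mc : R → ℝ := fun f => ⨅ n, b f n with hmc
    have hmcle : ∀ f n, mc f ≤ b f n := fun f n => ciInf_le (hbdd f) n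
    have hmclem : ∀ f, mc f ≤ m f := by
      intro f
      have := hmcle f 0
      simpa [hb] using this
    have hmcnonneg : ∀ f, 0 ≤ mc f := fun f => le_ciInf (hbnonneg f)
    have hclose : ∀ f (ε : ℝ), 0 < ε → ∃ n, b f n < mc f + ε := by
      intro f ε hε
      exact exists_lt_of_ciInf_lt (by linarith [le_refl (mc f)])
    have hpow : ∀ f (k n : ℕ), b (f ^ (k + 1)) ((k + 1) * n) = (b f n) ^ (k + 1) := by
      intro f k n
      show m (f ^ (k + 1) * c ^ ((k + 1) * n)) / m c ^ ((k + 1) * n)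
          = (m (f * c ^ n) / m c ^ n) ^ (k + 1)
      have h1 : f ^ (k + 1) * c ^ ((k + 1) * n) = (f * c ^ n) ^ (k + 1) := by
        rw [mul_pow, ← pow_mul, Nat.mul_comm]
      rw [h1, hmS.1.powmul, div_pow, ← pow_mul, Nat.mul_comm n (k + 1)]
    have hbmax : ∀ f g n, b (f - g) n ≤ max (b f n) (b g n) := by
      intro f g n
      show m ((f - g) * c ^ n) / m c ^ n
          ≤ max (m (f * c ^ n) / m c ^ n) (m (g * c ^ n) / m c ^ n)
      rw [sub_mul, max_div_div_right (by positivity : (0:ℝ) ≤ m c ^ n)]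
      gcongr
      exact hmS.1.nonarch _ _
    have hbmul : ∀ f g n, b (f * g) (n + n) ≤ b f n * b g n := by
      intro f g n
      show m (f * g * c ^ (n + n)) / m c ^ (n + n)
          ≤ (m (f * c ^ n) / m c ^ n) * (m (g * c ^ n) / m c ^ n)
      have h1 : f * g * c ^ (n + n) = (f * c ^ n) * (g * c ^ n) := by ring
      have h2 : (m c : ℝ) ^ (n + n) = m c ^ n * m c ^ n := by rw [pow_add]
      rw [h1, h2, div_mul_div_comm]
      gcongr
      all_goals first
        | exact hmS.1.submul _ _
        | exact hmS.1.nonneg _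
        | positivity
    have hmcS : mc ∈ S := by
      have hzero : mc 0 = 0 := by
        refine le_antisymm (le_trans (hmcle 0 0) ?_) (hmcnonneg 0)
        show m (0 * c ^ 0) / m c ^ 0 ≤ 0
        simp [hmS.1.zero]
      have hone : mc 1 = 1 := by
        have hbn : ∀ n, b 1 n = 1 := by
          intro n
          show m (1 * c ^ n) / m c ^ n = 1
          rw [one_mul, hcpow]
          exact div_self (by positivity)
        show (⨅ n, b 1 n) = 1
        simp only [hbn]
        exact ciInf_const
      refine ⟨⟨⟨hmcnonneg, hzero, hone, ?_, ?_⟩, ?_⟩, fun f => le_trans (hmclem f) (hmS.2 f)⟩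
      · intro f g
        refine le_of_forall_pos (f := fun ε => max (mc f) (mc g) + ε)
          (by fun_prop) (by simp) ?_
        intro ε hε
        beta_reduce
        obtain ⟨n1, hn1⟩ := hclose f ε hε
        obtain ⟨n2, hn2⟩ := hclose g ε hε
        set n := max n1 n2 with hn
        have h1 : b f n < mc f + ε := lt_of_le_of_lt (hbanti f n1 n (le_max_left _ _)) hn1
        have h2 : b g n < mc g + ε := lt_of_le_of_lt (hbanti g n2 n (le_max_right _ _)) hn2
        refine le_trans (hmcle (f - g) n) (le_trans (hbmax f g n) ?_)
        exact max_le (by linarith [le_max_left (mc f) (mc g)])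
          (by linarith [le_max_right (mc f) (mc g)])
      · intro f g
        refine le_of_forall_pos (f := fun ε => (mc f + ε) * (mc g + ε))
          (by fun_prop) (by simp) ?_
        intro ε hε
        beta_reduce
        obtain ⟨n1, hn1⟩ := hclose f ε hε
        obtain ⟨n2, hn2⟩ := hclose g ε hε
        set n := max n1 n2 with hn
        have h1 : b f n < mc f + ε := lt_of_le_of_lt (hbanti f n1 n (le_max_left _ _)) hn1
        have h2 : b g n < mc g + ε := lt_of_le_of_lt (hbanti g n2 n (le_max_right _ _)) hn2
        refine le_trans (hmcle (f * g) (n + n)) (le_trans (hbmul f g n) ?_)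
        exact mul_le_mul h1.le h2.le (hbnonneg g n) (by linarith [hmcnonneg f])
      · intro f k
        refine le_antisymm ?_ (le_ciInf fun n => ?_)
        · refine le_of_forall_pos (f := fun ε => (mc f + ε) ^ (k + 1))
            (by fun_prop) (by simp) ?_
          intro ε hε
          beta_reduce
          obtain ⟨n, hn⟩ := hclose f ε hε
          refine le_trans (hmcle (f ^ (k + 1)) ((k + 1) * n)) ?_
          rw [hpow f k n]
          exact pow_le_pow_left₀ (hbnonneg f n) hn.le _
        · calc mc f ^ (k + 1) ≤ b f n ^ (k + 1) :=
              pow_le_pow_left₀ (hmcnonneg f) (hmcle f n) _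
            _ = b (f ^ (k + 1)) ((k + 1) * n) := (hpow f k n).symm
            _ ≤ b (f ^ (k + 1)) n := hbanti _ n ((k + 1) * n) (Nat.le_mul_of_pos_left n k.succ_pos)
    -- minimality forces `mc = m`
    have hmceq : mc = m := hmin mc hmcS hmclem
    -- multiplicativity at `c`
    intro f
    have hb' : ∀ n, b (c * f) n = m c * b f (n + 1) := by
      intro n
      show m (c * f * c ^ n) / m c ^ n = m c * (m (f * c ^ (n + 1)) / m c ^ (n + 1))
      have h1 : c * f * c ^ n = f * c ^ (n + 1) := by ring
      rw [h1]
      field_simp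
      ring
    have htail : (⨅ n, b f (n + 1)) = mc f := by
      refine le_antisymm (le_ciInf fun n => ?_) (le_ciInf fun n => ?_)
      · refine le_trans (ciInf_le ⟨0, ?_⟩ n) (hbanti f n (n + 1) (Nat.le_succ n))
        rintro v ⟨i, rfl⟩; exact hbnonneg f (i + 1)
      · exact hmcle f (n + 1)
    have hpull : (⨅ n, m c * b f (n + 1)) = m c * mc f := by
      refine le_antisymm ?_ (le_ciInf fun n => ?_)
      · refine le_of_forall_pos (f := fun ε => m c * (mc f + ε))
          (by fun_prop) (by simp) ?_
        intro ε hε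
        beta_reduce
        obtain ⟨n, hn⟩ := hclose f ε hε
        have h3 : b f (n + 1) < mc f + ε :=
          lt_of_le_of_lt (hbanti f n (n + 1) (Nat.le_succ n)) hn
        refine le_trans (ciInf_le ⟨0, ?_⟩ n) ?_
        · rintro v ⟨i, rfl⟩
          exact mul_nonneg hc.le (hbnonneg f (i + 1))
        · exact mul_le_mul_of_nonneg_left h3.le hc.le
      · exact mul_le_mul_of_nonneg_left (hmcle f (n + 1)) hc.le
    have : mc (c * f) = m c * mc f := by
      show (⨅ n, b (c * f) n) = m c * mc f
      calc (⨅ n, b (c * f) n) = ⨅ n, m c * b f (n + 1) := by simp only [hb']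
        _ = m c * mc f := hpull
    rw [hmceq] at this
    exact this
  intro f g
  rcases eq_or_lt_of_le (hmS.1.nonneg f) with hf | hf
  · have h1 : m (f * g) ≤ 0 := by
      have := hmS.1.submul f g
      rw [← hf] at this
      simpa using this
    rw [← hf, zero_mul]
    exact le_antisymm h1 (hmS.1.nonneg _)
  · exact key f hf g

/-- The spectral ("smoothing") seminorm attached to a seminorm is power-multiplicative. -/
lemma smoothing {R : Type*} [CommRing R] (q : R → ℝ) (hq : SN q) :
    ∃ Q : R → ℝ, PMS Q ∧ ∀ f, Q f ≤ q f := by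
  classical
  set e : ℕ → ℝ := fun n => ((n : ℝ) + 1)⁻¹ with he
  have he_pos : ∀ n, 0 < e n := fun n => by positivity
  set Q : R → ℝ := fun f => ⨅ n : ℕ, (q (f ^ (n + 1))) ^ (e n) with hQdef
  have hbdd : ∀ f, BddBelow (Set.range fun n : ℕ => (q (f ^ (n + 1))) ^ (e n)) := by
    intro f
    refine ⟨0, ?_⟩
    rintro v ⟨n, rfl⟩
    exact Real.rpow_nonneg (hq.nonneg _) _
  have hQle' : ∀ f n, Q f ≤ (q (f ^ (n + 1))) ^ (e n) := fun f n => ciInf_le (hbdd f) n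
  have hQnonneg : ∀ f, 0 ≤ Q f := fun f => le_ciInf fun n => Real.rpow_nonneg (hq.nonneg _) _
  have hcancel : ∀ (x : ℝ), 0 ≤ x → ∀ n : ℕ, (x ^ (n + 1)) ^ (e n) = x := by
    intro x hx n
    rw [← Real.rpow_natCast x (n + 1), ← Real.rpow_mul hx]
    have h1 : ((n : ℝ) + 1) * e n = 1 := by
      rw [he]
      field_simp
    rw [show ((n + 1 : ℕ) : ℝ) = (n : ℝ) + 1 by push_cast; ring, h1, Real.rpow_one]
  have hQle : ∀ f, Q f ≤ q f := by
    intro f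
    have := hQle' f 0
    rw [pow_one] at this
    refine le_trans this (le_of_eq ?_)
    rw [he]
    norm_num
  have hQone : Q 1 = 1 := by
    have h1 : ∀ n : ℕ, (q ((1:R) ^ (n + 1))) ^ (e n) = 1 := by
      intro n
      rw [one_pow, hq.one, Real.one_rpow]
    rw [hQdef]
    simp only [h1]
    exact ciInf_const
  have hQzero : Q 0 = 0 :=
    le_antisymm (le_trans (hQle 0) (le_of_eq hq.zero)) (hQnonneg 0)
  -- the key geometric bound
  have hC : ∀ (f : R) (a : ℝ), 0 < a → Q f < a →
      ∃ C : ℝ, 1 ≤ C ∧ ∀ k, q (f ^ k) ≤ C * a ^ k := by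
    intro f a ha hfa
    obtain ⟨n, hn⟩ := exists_lt_of_ciInf_lt hfa
    set N := n + 1 with hN
    have h0 : 0 ≤ q (f ^ N) := hq.nonneg _
    have hqN : q (f ^ N) < a ^ N := by
      have h2 : ((q (f ^ N)) ^ (e n)) ^ ((N : ℕ) : ℝ) < a ^ ((N : ℕ) : ℝ) :=
        Real.rpow_lt_rpow (Real.rpow_nonneg h0 _) hn (by positivity)
      rw [← Real.rpow_mul h0, Real.rpow_natCast a] at h2
      have hexp : e n * ((N : ℕ) : ℝ) = 1 := by
        rw [he, hN]; push_cast; field_simp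
      rwa [hexp, Real.rpow_one] at h2
    set C : ℝ := Finset.sup' (Finset.range N) (by simp [hN]) (fun j => q (f ^ j) / a ^ j)
      with hCdef
    have hC1 : 1 ≤ C := by
      have h00 : (0 : ℕ) ∈ Finset.range N := by simp [hN]
      have h3 := Finset.le_sup' (fun j => q (f ^ j) / a ^ j) h00
      have h4 : q (f ^ 0) / a ^ 0 = 1 := by
        rw [pow_zero, pow_zero, hq.one, div_one]
      rw [h4] at h3
      exact h3
    refine ⟨C, hC1, ?_⟩
    intro k
    induction k using Nat.strong_induction_on with
    | _ k ih =>
      rcases Nat.lt_or_ge k N with hk | hk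
      · have hmem : k ∈ Finset.range N := Finset.mem_range.mpr hk
        have := Finset.le_sup' (fun j => q (f ^ j) / a ^ j) hmem
        rw [div_le_iff₀ (by positivity)] at this
        exact this
      · have hk0 : 0 < k := lt_of_lt_of_le (by simp [hN]) hk
        have hkN : k - N < k := Nat.sub_lt hk0 (by simp [hN])
        have hsplit : f ^ k = f ^ N * f ^ (k - N) := by
          rw [← pow_add, Nat.add_sub_cancel' hk]
        calc q (f ^ k) = q (f ^ N * f ^ (k - N)) := by rw [hsplit]
          _ ≤ q (f ^ N) * q (f ^ (k - N)) := hq.submul _ _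
          _ ≤ a ^ N * (C * a ^ (k - N)) :=
              mul_le_mul hqN.le (ih _ hkN) (hq.nonneg _) (by positivity)
          _ = C * (a ^ N * a ^ (k - N)) := by ring
          _ = C * a ^ k := by rw [← pow_add, Nat.add_sub_cancel' hk]
  -- the root trick: kill constants
  have hroot : ∀ (g : R) (Cc M : ℝ), 1 ≤ Cc → 0 ≤ M →
      (∀ n : ℕ, Q g ≤ Cc ^ (e n) * M) → Q g ≤ M := by
    intro g Cc M hCc hM h
    refine le_of_forall_pos (f := fun δ => (1 + δ) * M) (by fun_prop) (by simp) ?_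
    intro δ hδ
    beta_reduce
    obtain ⟨n, hn⟩ := pow_unbounded_of_one_lt Cc (by linarith : (1:ℝ) < 1 + δ)
    have hle : Cc ≤ (1 + δ) ^ (n + 1) :=
      le_trans hn.le (pow_le_pow_right₀ (by linarith) (Nat.le_succ n))
    have h2 : Cc ^ (e n) ≤ ((1 + δ) ^ (n + 1)) ^ (e n) :=
      Real.rpow_le_rpow (by linarith) hle (he_pos n).le
    rw [hcancel (1 + δ) (by linarith) n] at h2
    calc Q g ≤ Cc ^ (e n) * M := h n
      _ ≤ (1 + δ) * M := mul_le_mul_of_nonneg_right h2 hM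
  -- submultiplicativity
  have hQsubmul : ∀ f g, Q (f * g) ≤ Q f * Q g := by
    intro f g
    refine le_of_forall_pos (f := fun ε => (Q f + ε) * (Q g + ε)) (by fun_prop) (by simp) ?_
    intro ε hε
    beta_reduce
    have haf : (0:ℝ) < Q f + ε := by linarith [hQnonneg f]
    have hag : (0:ℝ) < Q g + ε := by linarith [hQnonneg g]
    obtain ⟨Cf, hCf1, hCf⟩ := hC f (Q f + ε) haf (by linarith [hQnonneg f])
    obtain ⟨Cg, hCg1, hCg⟩ := hC g (Q g + ε) hag (by linarith [hQnonneg g])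
    refine hroot (f * g) (Cf * Cg) ((Q f + ε) * (Q g + ε)) ((by nlinarith : (1:ℝ) ≤ Cf * Cg))
      (by positivity) ?_
    intro n
    have hb : q ((f * g) ^ (n + 1)) ≤ (Cf * Cg) * ((Q f + ε) * (Q g + ε)) ^ (n + 1) := by
      rw [mul_pow]
      calc q (f ^ (n+1) * g ^ (n+1)) ≤ q (f ^ (n+1)) * q (g ^ (n+1)) := hq.submul _ _
        _ ≤ (Cf * (Q f + ε) ^ (n+1)) * (Cg * (Q g + ε) ^ (n+1)) :=
            mul_le_mul (hCf _) (hCg _) (hq.nonneg _) (by positivity)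
        _ = (Cf * Cg) * ((Q f + ε) * (Q g + ε)) ^ (n + 1) := by rw [mul_pow]; ring
    calc Q (f * g) ≤ (q ((f * g) ^ (n + 1))) ^ (e n) := hQle' _ n
      _ ≤ ((Cf * Cg) * ((Q f + ε) * (Q g + ε)) ^ (n + 1)) ^ (e n) :=
          Real.rpow_le_rpow (hq.nonneg _) hb (he_pos n).le
      _ = (Cf * Cg) ^ (e n) * (((Q f + ε) * (Q g + ε)) ^ (n + 1)) ^ (e n) :=
          Real.mul_rpow (by positivity) (by positivity)
      _ = (Cf * Cg) ^ (e n) * ((Q f + ε) * (Q g + ε)) := by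
          rw [hcancel _ (by positivity) n]
  -- nonarchimedean
  have hQnonarch : ∀ f g, Q (f - g) ≤ max (Q f) (Q g) := by
    intro f g
    refine le_of_forall_pos (f := fun ε => max (Q f) (Q g) + ε) (by fun_prop) (by simp) ?_
    intro ε hε
    beta_reduce
    have haf : (0:ℝ) < Q f + ε := by linarith [hQnonneg f]
    have hag : (0:ℝ) < Q g + ε := by linarith [hQnonneg g]
    obtain ⟨Cf, hCf1, hCf⟩ := hC f (Q f + ε) haf (by linarith [hQnonneg f])
    obtain ⟨Cg, hCg1, hCg⟩ := hC g (Q g + ε) hag (by linarith [hQnonneg g])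
    set M : ℝ := max (Q f) (Q g) + ε with hM
    have hM0 : 0 < M := by
      have := le_max_left (Q f) (Q g)
      have := hQnonneg f
      rw [hM]; linarith
    have hfM : Q f + ε ≤ M := by rw [hM]; simp [le_max_left]
    have hgM : Q g + ε ≤ M := by rw [hM]; simp [le_max_right]
    refine hroot _ (Cf * Cg) M ((by nlinarith : (1:ℝ) ≤ Cf * Cg)) hM0.le ?_
    intro n
    have hterm : ∀ k ∈ Finset.range (n + 2),
        q (f ^ k * (-g) ^ (n + 1 - k) * ((n+1).choose k : R)) ≤ (Cf * Cg) * M ^ (n + 1) := by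
      intro k hk
      have hkle : k ≤ n + 1 := Nat.lt_succ_iff.mp (Finset.mem_range.mp hk)
      have hng : q ((-g) ^ (n + 1 - k)) = q (g ^ (n + 1 - k)) := by
        rcases Nat.even_or_odd (n + 1 - k) with hpar | hpar
        · rw [hpar.neg_pow]
        · rw [hpar.neg_pow, hq.neg]
      have hnat : q (f ^ k * (-g) ^ (n + 1 - k) * ((n+1).choose k : R))
          ≤ q (f ^ k * (-g) ^ (n + 1 - k)) := by
        rw [mul_comm, ← nsmul_eq_mul]
        exact hq.nsmul_le _ _
      calc q (f ^ k * (-g) ^ (n + 1 - k) * ((n+1).choose k : R))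
          ≤ q (f ^ k * (-g) ^ (n + 1 - k)) := hnat
        _ ≤ q (f ^ k) * q ((-g) ^ (n + 1 - k)) := hq.submul _ _
        _ = q (f ^ k) * q (g ^ (n + 1 - k)) := by rw [hng]
        _ ≤ (Cf * (Q f + ε) ^ k) * (Cg * (Q g + ε) ^ (n + 1 - k)) :=
            mul_le_mul (hCf _) (hCg _) (hq.nonneg _) (by positivity)
        _ ≤ (Cf * M ^ k) * (Cg * M ^ (n + 1 - k)) := by
            have h1 : (Q f + ε) ^ k ≤ M ^ k := pow_le_pow_left₀ haf.le hfM _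
            have h2 : (Q g + ε) ^ (n + 1 - k) ≤ M ^ (n + 1 - k) := pow_le_pow_left₀ hag.le hgM _
            exact mul_le_mul (mul_le_mul_of_nonneg_left h1 (by linarith))
              (mul_le_mul_of_nonneg_left h2 (by linarith)) (by positivity) (by positivity)
        _ = (Cf * Cg) * (M ^ k * M ^ (n + 1 - k)) := by ring
        _ = (Cf * Cg) * M ^ (n + 1) := by rw [← pow_add, Nat.add_sub_cancel' hkle]
    have hsum : q ((f - g) ^ (n + 1)) ≤ (Cf * Cg) * M ^ (n + 1) := by
      have hexp : (f - g) ^ (n + 1) =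
          ∑ k ∈ Finset.range (n + 2), f ^ k * (-g) ^ (n + 1 - k) * ((n+1).choose k : R) := by
        rw [sub_eq_add_neg, add_pow]
      rw [hexp]
      exact hq.sum_le _ _ (by positivity) hterm
    calc Q (f - g) ≤ (q ((f - g) ^ (n + 1))) ^ (e n) := hQle' _ n
      _ ≤ ((Cf * Cg) * M ^ (n + 1)) ^ (e n) :=
          Real.rpow_le_rpow (hq.nonneg _) hsum (he_pos n).le
      _ = (Cf * Cg) ^ (e n) * (M ^ (n + 1)) ^ (e n) :=
          Real.mul_rpow (by positivity) (by positivity)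
      _ = (Cf * Cg) ^ (e n) * M := by rw [hcancel _ hM0.le n]
  -- power-multiplicativity
  have hQpowmul : ∀ f (k : ℕ), Q (f ^ (k + 1)) = Q f ^ (k + 1) := by
    intro f k
    refine le_antisymm ?_ ?_
    · refine le_of_forall_pos (f := fun ε => (Q f + ε) ^ (k + 1)) (by fun_prop) (by simp) ?_
      intro ε hε
      beta_reduce
      have haf : (0:ℝ) < Q f + ε := by linarith [hQnonneg f]
      obtain ⟨Cf, hCf1, hCf⟩ := hC f (Q f + ε) haf (by linarith [hQnonneg f])
      refine hroot _ Cf ((Q f + ε) ^ (k + 1)) hCf1 (by positivity) ?_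
      intro n
      have hb : q ((f ^ (k + 1)) ^ (n + 1)) ≤ Cf * ((Q f + ε) ^ (k + 1)) ^ (n + 1) := by
        rw [← pow_mul, ← pow_mul]
        exact hCf _
      calc Q (f ^ (k + 1)) ≤ (q ((f ^ (k + 1)) ^ (n + 1))) ^ (e n) := hQle' _ n
        _ ≤ (Cf * ((Q f + ε) ^ (k + 1)) ^ (n + 1)) ^ (e n) :=
            Real.rpow_le_rpow (hq.nonneg _) hb (he_pos n).le
        _ = Cf ^ (e n) * (((Q f + ε) ^ (k + 1)) ^ (n + 1)) ^ (e n) :=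
            Real.mul_rpow (by positivity) (by positivity)
        _ = Cf ^ (e n) * (Q f + ε) ^ (k + 1) := by rw [hcancel _ (by positivity) n]
    · refine le_ciInf fun n => ?_
      set N1 := (k + 1) * (n + 1) with hN1
      have hN1pos : 0 < N1 := by positivity
      have hm : N1 - 1 + 1 = N1 := Nat.sub_add_cancel hN1pos
      have h1 : Q f ≤ (q (f ^ N1)) ^ (e (N1 - 1)) := by
        have := hQle' f (N1 - 1)
        rwa [hm] at this
      have h2 : Q f ^ (k + 1) ≤ ((q (f ^ N1)) ^ (e (N1 - 1))) ^ (k + 1) :=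
        pow_le_pow_left₀ (hQnonneg f) h1 _
      refine le_trans h2 (le_of_eq ?_)
      have hqnn : 0 ≤ q (f ^ N1) := hq.nonneg _
      rw [← Real.rpow_natCast ((q (f ^ N1)) ^ (e (N1 - 1))) (k + 1), ← Real.rpow_mul hqnn]
      have hcast : ((N1 - 1 : ℕ) : ℝ) + 1 = ((k : ℝ) + 1) * ((n : ℝ) + 1) := by
        have h5 : ((N1 - 1 : ℕ) : ℝ) + 1 = ((N1 - 1 + 1 : ℕ) : ℝ) := by push_cast; ring
        rw [h5, hm, hN1]; push_cast; ring
      have hexp : e (N1 - 1) * ((k + 1 : ℕ) : ℝ) = e n := by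
        simp only [he]
        rw [hcast]
        have hk0 : ((k : ℝ) + 1) ≠ 0 := by positivity
        have hn0 : ((n : ℝ) + 1) ≠ 0 := by positivity
        push_cast
        field_simp
      rw [hexp]
      congr 1
      rw [← pow_mul]
  exact ⟨Q, ⟨⟨hQnonneg, hQzero, hQone, hQnonarch, hQsubmul⟩, hQpowmul⟩, hQle⟩

open Polynomial in
/-- Existence of a multiplicative seminorm below `ν` attaining `ν z` (Berkovich's theorem). -/
lemma exists_point {A : Type*} [CommRing A] (ν : A → ℝ) (hν : PMS ν) (z : A) :
    ∃ p : A → ℝ, SN p ∧ (∀ a b, p (a * b) = p a * p b) ∧ (∀ a, p a ≤ ν a) ∧ ν z ≤ p z := by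
  classical
  rcases le_or_gt (ν z) 0 with hz | hr
  · obtain ⟨p, hp, hpm, hple⟩ := exists_mult_le ν hν
    exact ⟨p, hp.1, hpm, hple, le_trans hz (hp.1.nonneg z)⟩
  · set r := ν z with hrdef
    -- the weighted Gauss norm on polynomials
    set W : Polynomial A → ℝ := fun f => ⨆ k : ℕ, ν (f.coeff k) * r⁻¹ ^ k with hW
    have hrinv : 0 < r⁻¹ := inv_pos.mpr hr
    have htermnn : ∀ (f : Polynomial A) (k : ℕ), 0 ≤ ν (f.coeff k) * r⁻¹ ^ k :=
      fun f k => mul_nonneg (hν.nonneg _) (by positivity)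
    have hWbdd : ∀ f : Polynomial A,
        BddAbove (Set.range fun k => ν (f.coeff k) * r⁻¹ ^ k) := by
      intro f
      refine ⟨∑ k ∈ Finset.range (f.natDegree + 1), ν (f.coeff k) * r⁻¹ ^ k, ?_⟩
      rintro v ⟨j, rfl⟩
      beta_reduce
      rcases Nat.lt_or_ge j (f.natDegree + 1) with hj | hj
      · exact Finset.single_le_sum (fun i _ => htermnn f i) (Finset.mem_range.mpr hj)
      · have hz0 : f.coeff j = 0 := Polynomial.coeff_eq_zero_of_natDegree_lt (by omega)
        rw [hz0, hν.zero, zero_mul]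
        exact Finset.sum_nonneg fun i _ => htermnn f i
    have hWle : ∀ (f : Polynomial A) (k : ℕ), ν (f.coeff k) * r⁻¹ ^ k ≤ W f :=
      fun f k => le_ciSup (hWbdd f) k
    have hWnonneg : ∀ f, 0 ≤ W f := fun f => le_trans (htermnn f 0) (hWle f 0)
    have hWsup : ∀ (f : Polynomial A) (B : ℝ), (∀ k, ν (f.coeff k) * r⁻¹ ^ k ≤ B) → W f ≤ B :=
      fun f B h => ciSup_le h
    have hcoeff_le : ∀ (f : Polynomial A) (k : ℕ), ν (f.coeff k) ≤ W f * r ^ k := by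
      intro f k
      have h2 : r⁻¹ ^ k * r ^ k = 1 := by
        rw [← mul_pow, inv_mul_cancel₀ (ne_of_gt hr), one_pow]
      calc ν (f.coeff k) = ν (f.coeff k) * (r⁻¹ ^ k * r ^ k) := by rw [h2, mul_one]
        _ = (ν (f.coeff k) * r⁻¹ ^ k) * r ^ k := by ring
        _ ≤ W f * r ^ k := mul_le_mul_of_nonneg_right (hWle f k) (by positivity)
    have hWC : ∀ a : A, W (Polynomial.C a) = ν a := by
      intro a
      refine le_antisymm (hWsup _ _ ?_) ?_
      · intro k
        cases k with
        | zero => simp [Polynomial.coeff_C]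
        | succ k =>
          have hc : (Polynomial.C a).coeff (k + 1) = 0 := by simp [Polynomial.coeff_C]
          rw [hc, hν.zero, zero_mul]
          exact hν.nonneg a
      · have := hWle (Polynomial.C a) 0
        simpa [Polynomial.coeff_C] using this
    have hW0 : W 0 = 0 := by
      have := hWC 0
      rwa [Polynomial.C_0, hν.zero] at this
    have hW1 : W 1 = 1 := by
      have := hWC 1
      rwa [Polynomial.C_1, hν.one] at this
    have hWSN : SN W := by
      constructor
      · exact hWnonneg
      · exact hW0
      · exact hW1
      · intro f g
        refine hWsup _ _ fun k => ?_
        rw [Polynomial.coeff_sub]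
        calc ν (f.coeff k - g.coeff k) * r⁻¹ ^ k
            ≤ max (ν (f.coeff k)) (ν (g.coeff k)) * r⁻¹ ^ k :=
              mul_le_mul_of_nonneg_right (hν.nonarch _ _) (by positivity)
          _ = max (ν (f.coeff k) * r⁻¹ ^ k) (ν (g.coeff k) * r⁻¹ ^ k) :=
              max_mul_of_nonneg _ _ (by positivity)
          _ ≤ max (W f) (W g) := max_le_max (hWle f k) (hWle g k)
      · intro f g
        refine hWsup _ _ fun k => ?_
        rw [Polynomial.coeff_mul]
        have hterm : ∀ ij ∈ Finset.HasAntidiagonal.antidiagonal k,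
            ν (f.coeff ij.1 * g.coeff ij.2) ≤ (W f * W g) * r ^ k := by
          intro ij hij
          have hsum := Finset.HasAntidiagonal.mem_antidiagonal.mp hij
          calc ν (f.coeff ij.1 * g.coeff ij.2) ≤ ν (f.coeff ij.1) * ν (g.coeff ij.2) :=
                hν.submul _ _
            _ ≤ (W f * r ^ ij.1) * (W g * r ^ ij.2) :=
                mul_le_mul (hcoeff_le f _) (hcoeff_le g _) (hν.nonneg _)
                  (mul_nonneg (hWnonneg f) (by positivity))
            _ = (W f * W g) * (r ^ ij.1 * r ^ ij.2) := by ring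
            _ = (W f * W g) * r ^ k := by rw [← pow_add, hsum]
        have h1 : ν (∑ ij ∈ Finset.HasAntidiagonal.antidiagonal k, f.coeff ij.1 * g.coeff ij.2)
            ≤ (W f * W g) * r ^ k :=
          hν.toSN.sum_le _ _
            (mul_nonneg (mul_nonneg (hWnonneg f) (hWnonneg g)) (by positivity)) hterm
        calc ν (∑ ij ∈ Finset.HasAntidiagonal.antidiagonal k, f.coeff ij.1 * g.coeff ij.2) * r⁻¹ ^ k
            ≤ ((W f * W g) * r ^ k) * r⁻¹ ^ k :=
              mul_le_mul_of_nonneg_right h1 (by positivity)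
          _ = (W f * W g) * (r ^ k * r⁻¹ ^ k) := by ring
          _ = W f * W g := by
              rw [← mul_pow, mul_inv_cancel₀ (ne_of_gt hr), one_pow, mul_one]
    -- the crucial estimate: 1 is far from the ideal (1 - z·X)
    have hukey : ∀ w : Polynomial A, 1 ≤ W (1 - (1 - Polynomial.C z * Polynomial.X) * w) := by
      intro w
      by_contra hlt
      push_neg at hlt
      set v := 1 - (1 - Polynomial.C z * Polynomial.X) * w with hv
      have hvk : ∀ k, ν (v.coeff k) < r ^ k := by
        intro k
        have h1 : ν (v.coeff k) * r⁻¹ ^ k < 1 := lt_of_le_of_lt (hWle v k) hlt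
        have h2 : ν (v.coeff k) = (ν (v.coeff k) * r⁻¹ ^ k) * r ^ k := by
          rw [mul_assoc, ← mul_pow, inv_mul_cancel₀ (ne_of_gt hr), one_pow, mul_one]
        rw [h2]
        calc (ν (v.coeff k) * r⁻¹ ^ k) * r ^ k < 1 * r ^ k :=
            mul_lt_mul_of_pos_right h1 (by positivity)
          _ = r ^ k := one_mul _
      have hexp : v = 1 - (w - Polynomial.C z * (Polynomial.X * w)) := by rw [hv]; ring
      have hv0 : v.coeff 0 = 1 - w.coeff 0 := by
        rw [hexp]
        simp [Polynomial.coeff_one, Polynomial.coeff_sub, Polynomial.coeff_C_mul,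
          Polynomial.mul_coeff_zero]
      have hvs : ∀ k, v.coeff (k + 1) = z * w.coeff k - w.coeff (k + 1) := by
        intro k
        rw [hexp]
        rw [Polynomial.coeff_sub, Polynomial.coeff_one, Polynomial.coeff_sub,
          Polynomial.coeff_C_mul, Polynomial.coeff_X_mul]
        simp
      have hcl : ∀ k, ν (w.coeff k - z ^ k) < r ^ k := by
        intro k
        induction k with
        | zero =>
          have harg : w.coeff 0 - z ^ 0 = -(v.coeff 0) := by rw [hv0, pow_zero]; ring
          rw [harg, hν.toSN.neg]
          exact hvk 0
        | succ k ih =>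
          have harg : w.coeff (k + 1) - z ^ (k + 1)
              = z * (w.coeff k - z ^ k) - v.coeff (k + 1) := by
            rw [hvs k]; ring
          rw [harg]
          refine lt_of_le_of_lt (hν.nonarch _ _) (max_lt ?_ (hvk (k + 1)))
          calc ν (z * (w.coeff k - z ^ k)) ≤ ν z * ν (w.coeff k - z ^ k) := hν.submul _ _
            _ < r * r ^ k := mul_lt_mul_of_pos_left ih hr
            _ = r ^ (k + 1) := (pow_succ' r k).symm
      have h6 := hcl (w.natDegree + 1)
      rw [Polynomial.coeff_eq_zero_of_natDegree_lt (Nat.lt_succ_self _), zero_sub,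
        hν.toSN.neg, hν.pow z] at h6
      exact absurd h6 (lt_irrefl _)
    -- the quotient seminorm
    set u : Polynomial A := 1 - Polynomial.C z * Polynomial.X with hu
    set qq : Polynomial A → ℝ := fun f => ⨅ w : Polynomial A, W (f - u * w) with hqq
    have hqbdd : ∀ f : Polynomial A, BddBelow (Set.range fun w => W (f - u * w)) :=
      fun f => ⟨0, by rintro v ⟨w, rfl⟩; exact hWnonneg _⟩
    have hqle : ∀ f w, qq f ≤ W (f - u * w) := fun f w => ciInf_le (hqbdd f) w
    have hqleW : ∀ f, qq f ≤ W f := by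
      intro f
      have := hqle f 0
      simpa using this
    have hqnonneg : ∀ f, 0 ≤ qq f := fun f => le_ciInf fun w => hWnonneg _
    have hqclose : ∀ (f : Polynomial A) (ε : ℝ), 0 < ε → ∃ w, W (f - u * w) < qq f + ε :=
      fun f ε hε => exists_lt_of_ciInf_lt (lt_add_of_pos_right _ hε)
    have hqSN : SN qq := by
      constructor
      · exact hqnonneg
      · exact le_antisymm (le_trans (hqleW 0) (le_of_eq hW0)) (hqnonneg 0)
      · exact le_antisymm (le_trans (hqleW 1) (le_of_eq hW1)) (le_ciInf fun w => hukey w)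
      · intro f g
        refine le_of_forall_pos (f := fun ε => max (qq f) (qq g) + ε) (by fun_prop) (by simp) ?_
        intro ε hε
        beta_reduce
        obtain ⟨w1, hw1⟩ := hqclose f ε hε
        obtain ⟨w2, hw2⟩ := hqclose g ε hε
        have harg : (f - g) - u * (w1 - w2) = (f - u * w1) - (g - u * w2) := by ring
        calc qq (f - g) ≤ W ((f - g) - u * (w1 - w2)) := hqle _ _
          _ = W ((f - u * w1) - (g - u * w2)) := by rw [harg]
          _ ≤ max (W (f - u * w1)) (W (g - u * w2)) := hWSN.nonarch _ _
          _ ≤ max (qq f) (qq g) + ε := max_le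
              (by linarith [le_max_left (qq f) (qq g)])
              (by linarith [le_max_right (qq f) (qq g)])
      · intro f g
        refine le_of_forall_pos (f := fun ε => (qq f + ε) * (qq g + ε)) (by fun_prop) (by simp) ?_
        intro ε hε
        beta_reduce
        obtain ⟨w1, hw1⟩ := hqclose f ε hε
        obtain ⟨w2, hw2⟩ := hqclose g ε hε
        have harg : (f * g) - u * (f * w2 + w1 * g - u * (w1 * w2))
            = (f - u * w1) * (g - u * w2) := by ring
        calc qq (f * g) ≤ W ((f * g) - u * (f * w2 + w1 * g - u * (w1 * w2))) := hqle _ _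
          _ = W ((f - u * w1) * (g - u * w2)) := by rw [harg]
          _ ≤ W (f - u * w1) * W (g - u * w2) := hWSN.submul _ _
          _ ≤ (qq f + ε) * (qq g + ε) := mul_le_mul hw1.le hw2.le (hWnonneg _)
              (by linarith [hqnonneg f])
    obtain ⟨Q, hQPMS, hQle⟩ := smoothing qq hqSN
    obtain ⟨p, hpPMS, hpmul, hpleQ⟩ := exists_mult_le Q hQPMS
    have hpleW : ∀ f, p f ≤ W f := fun f => le_trans (hpleQ f) (le_trans (hQle f) (hqleW f))
    refine ⟨fun a => p (Polynomial.C a), ?_, ?_, ?_, ?_⟩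
    · constructor
      · exact fun a => hpPMS.nonneg _
      · show p (Polynomial.C 0) = 0
        rw [Polynomial.C_0]; exact hpPMS.zero
      · show p (Polynomial.C 1) = 1
        rw [Polynomial.C_1]; exact hpPMS.one
      · intro a b
        show p (Polynomial.C (a - b)) ≤ _
        rw [Polynomial.C_sub]
        exact hpPMS.nonarch _ _
      · intro a b
        show p (Polynomial.C (a * b)) ≤ _
        rw [Polynomial.C_mul]
        exact le_of_eq (hpmul _ _)
    · intro a b
      show p (Polynomial.C (a * b)) = _
      rw [Polynomial.C_mul]
      exact hpmul _ _
    · intro a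
      exact le_trans (hpleW _) (le_of_eq (hWC a))
    · -- ν z ≤ p (C z)
      have hpu : p u = 0 := by
        refine le_antisymm ?_ (hpPMS.nonneg u)
        refine le_trans (le_trans (hpleQ u) (hQle u)) ?_
        have := hqle u 1
        rw [mul_one, sub_self, hW0] at this
        exact this
      have hWX : W Polynomial.X ≤ r⁻¹ := by
        refine hWsup _ _ fun k => ?_
        rw [Polynomial.coeff_X]
        split_ifs with hk
        · rw [← hk, hν.one, one_mul, pow_one]
        · rw [hν.zero, zero_mul]
          positivity
      have hpX : p Polynomial.X ≤ r⁻¹ := le_trans (hpleW _) hWX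
      have hsum : (1 : Polynomial A) = u + Polynomial.C z * Polynomial.X := by rw [hu]; ring
      have h7 : (1 : ℝ) ≤ max (p u) (p (Polynomial.C z * Polynomial.X)) := by
        have h8 := hpPMS.toSN.add_le u (Polynomial.C z * Polynomial.X)
        rw [← hsum, hpPMS.one] at h8
        exact h8
      rw [hpu] at h7
      have h8 : (1 : ℝ) ≤ p (Polynomial.C z * Polynomial.X) := by
        rcases le_max_iff.mp h7 with h | h
        · linarith
        · exact h
      rw [hpmul] at h8
      have h9 : (1 : ℝ) ≤ p (Polynomial.C z) * r⁻¹ :=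
        le_trans h8 (mul_le_mul_of_nonneg_left hpX (hpPMS.nonneg _))
      have h10 : r * 1 ≤ r * (p (Polynomial.C z) * r⁻¹) :=
        mul_le_mul_of_nonneg_left h9 hr.le
      have h11 : r * (p (Polynomial.C z) * r⁻¹) = p (Polynomial.C z) := by
        field_simp
      rw [mul_one, h11] at h10
      exact h10

section NM

variable {B : Type*} [CommRing B] {nm : B → ℝ}

lemma nm_neg (h : IsNABanach nm) (a : B) : nm (-a) = nm a := by
  have h0 : nm 0 = 0 := (h.eq_zero_iff 0).mpr rfl
  have h1 : ∀ b : B, nm (-b) ≤ nm b := by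
    intro b
    have := h.nonarch 0 b
    simpa [h0, h.nonneg b] using this
  have h2 := h1 (-a)
  rw [neg_neg] at h2
  exact le_antisymm (h1 a) h2

lemma nm_add_le (h : IsNABanach nm) (a b : B) : nm (a + b) ≤ max (nm a) (nm b) := by
  have := h.nonarch a (-b)
  rwa [sub_neg_eq_add, nm_neg h] at this

lemma nm_sum_le (h : IsNABanach nm) {ι : Type*} (s : Finset ι) (f : ι → B) {Bd : ℝ}
    (hBd : 0 ≤ Bd) (hb : ∀ i ∈ s, nm (f i) ≤ Bd) : nm (∑ i ∈ s, f i) ≤ Bd := by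
  classical
  have h0 : nm 0 = 0 := (h.eq_zero_iff 0).mpr rfl
  induction s using Finset.induction with
  | empty => simpa [h0] using hBd
  | insert _ _ hndup ih =>
    rename_i a s
    rw [Finset.sum_insert hndup]
    exact le_trans (nm_add_le h _ _) (max_le (hb a (by simp)) (ih fun i hi => hb i (by simp [hi])))

end NM

/-- A nonnegative null sequence with positive sup attains its sup at a first index. -/
lemma sup_attained {s : ℕ → ℝ} (hs0 : ∀ n, 0 ≤ s n) (hst : Filter.Tendsto s Filter.atTop (nhds 0))
    (hpos : 0 < ⨆ n, s n) :
    ∃ i0, s i0 = (⨆ n, s n) ∧ ∀ i < i0, s i < (⨆ n, s n) := by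
  classical
  have hbdd : BddAbove (Set.range s) := hst.bddAbove_range
  set S := ⨆ n, s n with hS
  have hev : ∀ᶠ i in Filter.atTop, s i < S / 2 := hst.eventually_lt_const (by linarith)
  obtain ⟨N, hN⟩ := Filter.eventually_atTop.mp hev
  have hne : (Finset.range (N + 1)).Nonempty := ⟨0, by simp⟩
  set M := Finset.sup' _ hne s with hM
  have hSM : S ≤ max M (S / 2) := by
    refine ciSup_le fun i => ?_
    rcases Nat.lt_or_ge i (N + 1) with hi | hi
    · exact le_trans (Finset.le_sup' s (Finset.mem_range.mpr hi)) (le_max_left _ _)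
    · exact le_trans (hN i (by omega)).le (le_max_right _ _)
  have hSM' : S ≤ M := by
    rcases max_cases M (S / 2) with ⟨heq, _⟩ | ⟨heq, _⟩
    · rwa [heq] at hSM
    · rw [heq] at hSM; linarith
  obtain ⟨i1, hi1mem, hi1⟩ := Finset.exists_mem_eq_sup' hne s
  have hexists : ∃ i, S ≤ s i := ⟨i1, le_trans hSM' (le_of_eq hi1)⟩
  refine ⟨Nat.find hexists, le_antisymm (le_ciSup hbdd _) (Nat.find_spec hexists),
    fun i hi => ?_⟩
  exact not_le.mp (Nat.find_min hexists hi)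

end Stmt7Aux

open Stmt7Aux in
/-- Elements of the Tate algebra `A⟨T⟩` are null sequences of coefficients, with the
Gauss norm `sup_n |a_n|`; multiplication is the Cauchy convolution product.
If `A` is uniform and the coefficients of `x ∈ A⟨T⟩` generate the unit ideal of `A`,
then multiplication by `x` on `A⟨T⟩` is a strict injection. -/
theorem stmt7 {A : Type*} [CommRing A] (nm : A → ℝ) (hB : IsNABanach nm)
    (huniform : ∃ nm' : A → ℝ,
      (∀ x, 0 ≤ nm' x) ∧ (∀ x y, nm' (x - y) ≤ max (nm' x) (nm' y)) ∧
      (∀ x y, nm' (x * y) ≤ nm' x * nm' y) ∧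
      (∀ (x : A) (n : ℕ), 1 ≤ n → nm' (x ^ n) = nm' x ^ n) ∧
      ∃ c C : ℝ, 0 < c ∧ 0 < C ∧ ∀ x, c * nm' x ≤ nm x ∧ nm x ≤ C * nm' x)
    (x : ℕ → A)
    (hxnull : Tendsto (fun n => nm (x n)) atTop (nhds 0))
    (hxspan : Ideal.span (Set.range x) = ⊤) :
    let conv : (ℕ → A) → (ℕ → A) → (ℕ → A) := fun a b n =>
      ∑ i ∈ Finset.range (n + 1), a i * b (n - i)
    let G : (ℕ → A) → ℝ := fun a => ⨆ n, nm (a n)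
    (∃ c : ℝ, 0 < c ∧ ∀ y : ℕ → A, Tendsto (fun n => nm (y n)) atTop (nhds 0) →
      c * G y ≤ G (conv x y)) ∧
    ∀ y : ℕ → A, Tendsto (fun n => nm (y n)) atTop (nhds 0) →
      conv x y = 0 → y = 0 := by
  classical
  obtain ⟨ν, hν0, hνna, hνsub, hνpm, c₁, Cc, hc₁, hCc, hcC⟩ := huniform
  intro conv G
  have hnm0 : nm 0 = 0 := (hB.eq_zero_iff 0).mpr rfl
  by_cases htriv : (1 : A) = 0
  · -- degenerate (zero) ring
    have hall : ∀ a : A, a = 0 := fun a => by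
      calc a = a * 1 := (mul_one a).symm
        _ = a * 0 := by rw [htriv]
        _ = 0 := mul_zero a
    constructor
    · refine ⟨1, one_pos, fun y hy => ?_⟩
      have hfun : (fun n => nm (y n)) = fun n => nm (conv x y n) :=
        funext fun n => by rw [hall (y n), hall (conv x y n)]
      show 1 * (⨆ n, nm (y n)) ≤ ⨆ n, nm (conv x y n)
      rw [one_mul, hfun]
    · intro y hy h0
      funext n
      exact hall (y n)
  · -- nontrivial ring
    have hν1 : ν 1 = 1 := by
      have h2 := hνpm 1 2 (by norm_num)
      rw [one_pow] at h2
      have hn1 : ν 1 = 0 ∨ ν 1 = 1 := by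
        have h3 : ν 1 * (ν 1 - 1) = 0 := by nlinarith [h2]
        rcases mul_eq_zero.mp h3 with h | h
        · exact Or.inl h
        · exact Or.inr (by linarith)
      rcases hn1 with h | h
      · exfalso
        have h4 := (hcC 1).2
        rw [h, mul_zero] at h4
        have h5 : nm 1 = 0 := le_antisymm h4 (hB.nonneg 1)
        exact htriv ((hB.eq_zero_iff 1).mp h5)
      · exact h
    have hν0' : ν 0 = 0 := by
      have h1 := (hcC 0).1
      rw [hnm0] at h1
      have h2 := hν0 0
      nlinarith
    have hνPMS : PMS ν := ⟨⟨hν0, hν0', hν1, hνna, hνsub⟩, fun f n => hνpm f (n + 1) (by omega)⟩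
    have hzero_of_nm : ∀ a : A, nm a ≤ 0 → a = 0 := fun a h =>
      (hB.eq_zero_iff a).mp (le_antisymm h (hB.nonneg a))
    have hν_le : ∀ a, ν a ≤ c₁⁻¹ * nm a := by
      intro a
      calc ν a = c₁⁻¹ * (c₁ * ν a) := by field_simp
        _ ≤ c₁⁻¹ * nm a := mul_le_mul_of_nonneg_left (hcC a).1 (by positivity)
    -- write 1 as a finite combination of the x i
    have hone_mem : (1 : A) ∈ Ideal.span (Set.range x) := by rw [hxspan]; trivial
    obtain ⟨co, hco⟩ := Finsupp.mem_span_range_iff_exists_finsupp.mp hone_mem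
    set F := co.support with hF
    have hco' : ∑ i ∈ F, co i * x i = 1 := by
      rw [← hco, Finsupp.sum]
      exact Finset.sum_congr rfl fun i _ => rfl
    set D := (∑ i ∈ F, ν (co i)) + 1 with hD
    have hD1 : (1 : ℝ) ≤ D := by
      have : (0:ℝ) ≤ ∑ i ∈ F, ν (co i) := Finset.sum_nonneg fun i _ => hν0 _
      linarith
    have hD0 : (0 : ℝ) < D := by linarith
    have hDub : ∀ i ∈ F, ν (co i) ≤ D := by
      intro i hi
      have := Finset.single_le_sum (fun j (_ : j ∈ F) => hν0 (co j)) hi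
      linarith
    obtain ⟨Bx, hBx⟩ := hxnull.bddAbove_range
    have hBx' : ∀ i, nm (x i) ≤ Bx := fun i => hBx ⟨i, rfl⟩
    have hBx0 : (0:ℝ) ≤ Bx := le_trans (hB.nonneg (x 0)) (hBx' 0)
    set cst : ℝ := c₁ * D⁻¹ * Cc⁻¹ with hcst
    have hcst0 : 0 < cst := by positivity
    -- the main estimate
    have hkey : ∀ y : ℕ → A, Tendsto (fun n => nm (y n)) atTop (nhds 0) →
        ∀ n : ℕ, cst * nm (y n) ≤ G (conv x y) := by
      intro y hy n
      obtain ⟨p, hpSN, hpmul, hpleν, hpz⟩ := exists_point ν hνPMS (y n)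
      obtain ⟨By, hBy⟩ := hy.bddAbove_range
      have hBy' : ∀ j, nm (y j) ≤ By := fun j => hBy ⟨j, rfl⟩
      have hBy0 : (0:ℝ) ≤ By := le_trans (hB.nonneg (y 0)) (hBy' 0)
      have hconvbdd : BddAbove (Set.range fun k => nm (conv x y k)) := by
        refine ⟨Bx * By, ?_⟩
        rintro v ⟨k, rfl⟩
        beta_reduce
        show nm (∑ i ∈ Finset.range (k + 1), x i * y (k - i)) ≤ Bx * By
        refine nm_sum_le hB _ _ (by positivity) ?_
        intro i hi
        exact le_trans (hB.submul _ _) (mul_le_mul (hBx' i) (hBy' _) (hB.nonneg _) hBx0)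
      have hGconv : ∀ k, nm (conv x y k) ≤ G (conv x y) := fun k => le_ciSup hconvbdd k
      have hGconv0 : 0 ≤ G (conv x y) := le_trans (hB.nonneg _) (hGconv 0)
      -- the p-values
      have hpx0 : ∀ i, 0 ≤ p (x i) := fun i => hpSN.nonneg _
      have hpy0 : ∀ j, 0 ≤ p (y j) := fun j => hpSN.nonneg _
      have hple_nm : ∀ a : A, p a ≤ c₁⁻¹ * nm a := fun a => le_trans (hpleν a) (hν_le a)
      have hmulnull : Tendsto (fun i => c₁⁻¹ * nm (x i)) atTop (nhds 0) := by
        have := hxnull.const_mul c₁⁻¹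
        simpa using this
      have hpxnull : Tendsto (fun i => p (x i)) atTop (nhds 0) :=
        squeeze_zero hpx0 (fun i => hple_nm (x i)) hmulnull
      have hmulnull' : Tendsto (fun j => c₁⁻¹ * nm (y j)) atTop (nhds 0) := by
        have := hy.const_mul c₁⁻¹
        simpa using this
      have hpynull : Tendsto (fun j => p (y j)) atTop (nhds 0) :=
        squeeze_zero hpy0 (fun j => hple_nm (y j)) hmulnull'
      have hpxbdd : BddAbove (Set.range fun i => p (x i)) := hpxnull.bddAbove_range
      have hpybdd : BddAbove (Set.range fun j => p (y j)) := hpynull.bddAbove_range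
      set X := ⨆ i, p (x i) with hX
      set Y := ⨆ j, p (y j) with hY
      have hXle : ∀ i, p (x i) ≤ X := fun i => le_ciSup hpxbdd i
      have hYle : ∀ j, p (y j) ≤ Y := fun j => le_ciSup hpybdd j
      -- X is bounded below by D⁻¹
      have hXD : D⁻¹ ≤ X := by
        by_contra hcon
        push_neg at hcon
        have hlt : ∀ i ∈ F, p (co i * x i) < 1 := by
          intro i hi
          rw [hpmul]
          calc p (co i) * p (x i) ≤ D * p (x i) :=
              mul_le_mul_of_nonneg_right (le_trans (hpleν _) (hDub i hi)) (hpx0 i)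
            _ ≤ D * X := mul_le_mul_of_nonneg_left (hXle i) hD0.le
            _ < D * D⁻¹ := mul_lt_mul_of_pos_left hcon hD0
            _ = 1 := mul_inv_cancel₀ (ne_of_gt hD0)
        have hs : p (∑ i ∈ F, co i * x i) < 1 :=
          hpSN.sum_lt _ _ one_pos hlt
        rw [hco', hpSN.one] at hs
        exact lt_irrefl 1 hs
      rcases le_or_gt Y 0 with hYneg | hYpos
      · -- y n has zero seminorm
        have hyn0 : p (y n) ≤ 0 := le_trans (hYle n) hYneg
        have hν_yn : ν (y n) ≤ 0 := le_trans hpz hyn0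
        have hnm_yn : nm (y n) = 0 := by
          have h1 := (hcC (y n)).2
          have h2 : nm (y n) ≤ 0 := le_trans h1 (by nlinarith)
          exact le_antisymm h2 (hB.nonneg _)
        rw [hnm_yn, mul_zero]
        exact hGconv0
      · have hX0 : (0:ℝ) < X := lt_of_lt_of_le (by positivity) hXD
        obtain ⟨i0, hi0eq, hi0lt⟩ := sup_attained hpx0 hpxnull hX0
        obtain ⟨j0, hj0eq, hj0lt⟩ := sup_attained hpy0 hpynull hYpos
        set k := i0 + j0 with hk
        have hmem : i0 ∈ Finset.range (k + 1) := Finset.mem_range.mpr (by omega)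
        have hsplit : conv x y k
            = x i0 * y (k - i0) + ∑ i ∈ (Finset.range (k + 1)).erase i0, x i * y (k - i) := by
          show (∑ i ∈ Finset.range (k + 1), x i * y (k - i)) = _
          rw [Finset.add_sum_erase _ (fun i => x i * y (k - i)) hmem]
        have hki0 : k - i0 = j0 := by omega
        have hfirst : p (x i0 * y (k - i0)) = X * Y := by
          rw [hki0, hpmul, hi0eq, hj0eq]
        have hrest : p (∑ i ∈ (Finset.range (k + 1)).erase i0, x i * y (k - i)) < X * Y := by
          refine hpSN.sum_lt _ _ (by positivity) ?_
          intro i hi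
          obtain ⟨hine, hirange⟩ := Finset.mem_erase.mp hi
          have hik : i < k + 1 := Finset.mem_range.mp hirange
          rcases lt_or_gt_of_ne hine with hlt | hgt
          · calc p (x i * y (k - i)) = p (x i) * p (y (k - i)) := hpmul _ _
              _ ≤ p (x i) * Y := mul_le_mul_of_nonneg_left (hYle _) (hpx0 i)
              _ < X * Y := mul_lt_mul_of_pos_right (hi0lt i hlt) hYpos
          · have hkij : k - i < j0 := by omega
            calc p (x i * y (k - i)) = p (x i) * p (y (k - i)) := hpmul _ _
              _ ≤ X * p (y (k - i)) := mul_le_mul_of_nonneg_right (hXle i) (hpy0 _)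
              _ < X * Y := mul_lt_mul_of_pos_left (hj0lt _ hkij) hX0
        have hconvk : X * Y ≤ p (conv x y k) := by
          rw [hsplit]
          set aa := x i0 * y (k - i0) with haa
          set bb := ∑ i ∈ (Finset.range (k + 1)).erase i0, x i * y (k - i) with hbb
          rw [← hfirst]
          have h5 : p aa ≤ max (p (aa + bb)) (p bb) := by
            have h6 := hpSN.nonarch (aa + bb) bb
            rwa [add_sub_cancel_right] at h6
          rcases le_max_iff.mp h5 with h | h
          · exact h
          · exfalso
            rw [hfirst] at h
            exact absurd (lt_of_le_of_lt (hfirst ▸ h) hrest) (lt_irrefl _)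
        have h6 : ν (y n) ≤ Y := le_trans hpz (hYle n)
        have h7 : D⁻¹ * ν (y n) ≤ X * Y :=
          mul_le_mul hXD h6 (hν0 _) hX0.le
        have h8 : c₁ * (D⁻¹ * ν (y n)) ≤ nm (conv x y k) := by
          have hp_le_ν : p (conv x y k) ≤ ν (conv x y k) := hpleν _
          calc c₁ * (D⁻¹ * ν (y n)) ≤ c₁ * ν (conv x y k) :=
              mul_le_mul_of_nonneg_left (le_trans (le_trans h7 hconvk) hp_le_ν) hc₁.le
            _ ≤ nm (conv x y k) := (hcC _).1
        have h9 : nm (y n) ≤ Cc * ν (y n) := (hcC (y n)).2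
        calc cst * nm (y n) ≤ cst * (Cc * ν (y n)) :=
            mul_le_mul_of_nonneg_left h9 hcst0.le
          _ = c₁ * (D⁻¹ * ν (y n)) := by rw [hcst]; field_simp
          _ ≤ nm (conv x y k) := h8
          _ ≤ G (conv x y) := hGconv k
    constructor
    · refine ⟨cst, hcst0, fun y hy => ?_⟩
      have h1 : ∀ n, nm (y n) ≤ cst⁻¹ * G (conv x y) := by
        intro n
        have h2 := hkey y hy n
        calc nm (y n) = cst⁻¹ * (cst * nm (y n)) := by field_simp
          _ ≤ cst⁻¹ * G (conv x y) := mul_le_mul_of_nonneg_left h2 (by positivity)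
      have h3 : G y ≤ cst⁻¹ * G (conv x y) := ciSup_le h1
      calc cst * G y ≤ cst * (cst⁻¹ * G (conv x y)) :=
          mul_le_mul_of_nonneg_left h3 hcst0.le
        _ = G (conv x y) := by field_simp
    · intro y hy h0
      funext n
      have h2 := hkey y hy n
      rw [h0] at h2
      have hG0 : G (0 : ℕ → A) = 0 := by
        show (⨆ n, nm ((0 : ℕ → A) n)) = 0
        have hz : ∀ n : ℕ, nm ((0 : ℕ → A) n) = 0 := fun n => hnm0
        simp only [hz]
        exact ciSup_const
      rw [hG0] at h2
      have h3 : nm (y n) ≤ 0 := by nlinarith [hB.nonneg (y n)]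
      exact hzero_of_nm _ h3
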